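/- Fix η > 0, Λ > 0, and integers M ≥ N ≥ 1 with M ≥ 2; set ℓ := Λ/N. Choose the half-shifted equispaced design x_k := 2π(k − 1/2)/(M·ℓ) for k = 1, …, M, and let T_x be the M×N matrix with entries (T_x)_{kj} = γ_k(x_k)·exp(i·x_k·j·ℓ)·w_j, where γ_k(x_k) := −2i·sin((x_k + iη)·ℓ/2)·exp(i·x_k·ℓ/2) and w_j := exp(−η·(j + 1/2)·ℓ), 0 ≤ j ≤ N−1. Then: (i) the M×N matrix F_x with entries exp(i·x_k·j·ℓ) satisfies Fᴴ_x·F_x = M·I_N; (ii) min over k = 1,…,M of |γ_k(x_k)| equals 2·√(sinh²(η·ℓ/2) + sin²(π/(2M))); (iii) σ_min(T_x) ≥ 2·√M·√(sinh²(η·ℓ/2) + sin²(π/(2M)))·exp(−η·(Λ − ℓ/2)), where σ_min(T_x) := inf over unit vectors c ∈ ℂ^N of ‖T_x·c‖₂. -/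

import Mathlib

open scoped Matrix


open Complex in
lemma absSinAux (a b : ℝ) :
    ‖Complex.sin ((a : ℂ) + (b : ℂ) * Complex.I)‖ =
      Real.sqrt (Real.sin a ^ 2 + Real.sinh b ^ 2) := by
  rw [Complex.sin_add, Complex.cos_mul_I, Complex.sin_mul_I]
  have : Complex.sin a * Complex.cosh b + Complex.cos a * (Complex.sinh b * Complex.I)
      = ((Real.sin a * Real.cosh b : ℝ) : ℂ) + ((Real.cos a * Real.sinh b : ℝ) : ℂ) * Complex.I := by
    push_cast [Complex.ofReal_sin, Complex.ofReal_cos, Complex.ofReal_sinh, Complex.ofReal_cosh]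
    ring
  rw [this, Complex.norm_def, Complex.normSq_add_mul_I]
  congr 1
  have h1 := Real.sin_sq_add_cos_sq a
  have h2 := Real.cosh_sq b
  nlinarith

lemma sinGeAux {ε a : ℝ} (hε0 : 0 ≤ ε) (hε : ε ≤ Real.pi / 2) (h1 : ε ≤ a)
    (h2 : a ≤ Real.pi - ε) : Real.sin ε ≤ Real.sin a := by
  have hmono := Real.strictMonoOn_sin.monotoneOn
  rcases le_total a (Real.pi / 2) with h | h
  · exact hmono ⟨by linarith, hε⟩ ⟨by linarith, h⟩ h1
  · rw [← Real.sin_pi_sub a]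
    exact hmono ⟨by linarith, hε⟩ ⟨by linarith [Real.pi_pos], by linarith⟩ (by linarith)

lemma geomZeroAux {M : ℕ} (z : ℂ) (hzM : z ^ M = 1) (hz : z ≠ 1) :
    ∑ k : Fin M, z ^ (k : ℕ) = 0 := by
  rw [Fin.sum_univ_eq_sum_range (fun i => z ^ i) M, geom_sum_eq hz, hzM]
  simp

/-- The least singular value (on the domain dimension) of a rectangular complex
matrix: `σ_min(T) = inf_{‖c‖₂ = 1} ‖T c‖₂`. -/
noncomputable def sigmaMin {m n : ℕ} (L : Matrix (Fin m) (Fin n) ℂ) : ℝ :=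
  ⨅ x : {x : EuclideanSpace ℂ (Fin n) // ‖x‖ = 1}, ‖Matrix.toEuclideanLin L x.1‖

set_option maxHeartbeats 1000000 in
theorem stmt11 (η Λ : ℝ) (hη : 0 < η) (hΛ : 0 < Λ)
    (M N : ℕ) (hN : 1 ≤ N) (hMN : N ≤ M) (hM : 2 ≤ M)
    (ℓ : ℝ) (hℓ : ℓ = Λ / N)
    (x : Fin M → ℝ)
    (hx : ∀ k : Fin M, x k = 2 * Real.pi * (((k : ℕ) : ℝ) + 1 / 2) / ((M : ℝ) * ℓ))
    (γ : Fin M → ℂ)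
    (hγ : ∀ k, γ k = (-2) * Complex.I *
      Complex.sin ((((x k : ℝ) : ℂ) + (η : ℂ) * Complex.I) * (ℓ : ℂ) / 2) *
      Complex.exp (Complex.I * ((x k : ℝ) : ℂ) * (ℓ : ℂ) / 2))
    (w : Fin N → ℝ)
    (hw : ∀ j, w j = Real.exp (-η * (((j : ℕ) : ℝ) + 1 / 2) * ℓ))
    (F : Matrix (Fin M) (Fin N) ℂ)
    (hF : ∀ k j, F k j =
      Complex.exp (Complex.I * ((x k : ℝ) : ℂ) * ((j : ℕ) : ℂ) * (ℓ : ℂ)))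
    (T : Matrix (Fin M) (Fin N) ℂ)
    (hT : ∀ k j, T k j = γ k * F k j * (w j : ℂ)) :
    Fᴴ * F = (M : ℂ) • (1 : Matrix (Fin N) (Fin N) ℂ) ∧
    IsLeast (Set.range fun k => ‖γ k‖)
      (2 * Real.sqrt (Real.sinh (η * ℓ / 2) ^ 2 + Real.sin (Real.pi / (2 * M)) ^ 2)) ∧
    2 * Real.sqrt M *
        Real.sqrt (Real.sinh (η * ℓ / 2) ^ 2 + Real.sin (Real.pi / (2 * M)) ^ 2) *
        Real.exp (-η * (Λ - ℓ / 2))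
      ≤ sigmaMin T := by
  have h1 : Fᴴ * F = (M : ℂ) • (1 : Matrix (Fin N) (Fin N) ℂ) := by
    have hN0 : (0:ℝ) < N := by exact_mod_cast hN
    have hM0 : (0:ℝ) < M := by positivity
    have hℓ0 : 0 < ℓ := by rw [hℓ]; positivity
    have hxl : ∀ k : Fin M, x k * ℓ = 2 * Real.pi * (((k:ℕ):ℝ) + 1/2) / M := by
      intro k; rw [hx k]; field_simp
    ext j j'
    rw [Matrix.mul_apply]
    simp only [Matrix.conjTranspose_apply, hF, Matrix.smul_apply, Matrix.one_apply, smul_eq_mul]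
    set d : ℝ := ((j':Fin N):ℝ) - ((j:Fin N):ℝ) with hd
    have hterm : ∀ k : Fin M,
        star (Complex.exp (Complex.I * (x k : ℂ) * ((j:ℕ):ℂ) * (ℓ:ℂ))) *
          Complex.exp (Complex.I * (x k : ℂ) * ((j':ℕ):ℂ) * (ℓ:ℂ)) =
        Complex.exp ((Real.pi * d / M : ℝ) * Complex.I) *
          Complex.exp ((2 * Real.pi * d / M : ℝ) * Complex.I) ^ (k:ℕ) := by
      intro k
      rw [← Complex.exp_nat_mul, ← Complex.exp_add, Complex.star_def, ← Complex.exp_conj,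
        ← Complex.exp_add]
      congr 1
      have hc : (starRingEnd ℂ) (Complex.I * (x k : ℂ) * ((j:ℕ):ℂ) * (ℓ:ℂ))
          = -Complex.I * (x k : ℂ) * ((j:ℕ):ℂ) * (ℓ:ℂ) := by
        simp [map_mul, Complex.conj_I, Complex.conj_ofReal]
        try ring
      rw [hc]
      have hxlC : (x k : ℂ) * (ℓ : ℂ) = ((2 * Real.pi * (((k:ℕ):ℝ) + 1/2) / M : ℝ) : ℂ) := by
        rw [← Complex.ofReal_mul, hxl k]
      have hMne : ((M:ℂ)) ≠ 0 := by exact_mod_cast hM0.ne'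
      push_cast [hd]
      push_cast at hxlC
      linear_combination Complex.I * ((((j':Fin N):ℕ):ℂ) - (((j:Fin N):ℕ):ℂ)) * hxlC
    rw [Finset.sum_congr rfl (fun k _ => hterm k), ← Finset.mul_sum]
    by_cases hjj : j = j'
    · subst hjj
      simp [hd]
    · have hdne : d ≠ 0 := by
        simp only [hd, sub_ne_zero]
        exact_mod_cast fun h => hjj (Fin.ext (by exact_mod_cast h.symm))
      have hdlt : |d| < M := by
        have h1 : ((j':Fin N):ℝ) < N := by exact_mod_cast (j' : Fin N).2
        have h2 : ((j:Fin N):ℝ) < N := by exact_mod_cast (j : Fin N).2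
        have h3 : (0:ℝ) ≤ ((j':Fin N):ℝ) := by positivity
        have h4 : (0:ℝ) ≤ ((j:Fin N):ℝ) := by positivity
        have h5 : (N:ℝ) ≤ M := by exact_mod_cast hMN
        rw [abs_lt]; constructor <;> [skip; skip] <;> simp only [hd] <;> linarith
      have hzM : Complex.exp ((2 * Real.pi * d / M : ℝ) * Complex.I) ^ M = 1 := by
        rw [← Complex.exp_nat_mul]
        have key : (M:ℂ) * ((2 * Real.pi * d / M : ℝ) * Complex.I)
            = (((((j':Fin N):ℕ):ℤ) - (((j:Fin N):ℕ):ℤ) : ℤ) : ℂ) * (2 * Real.pi * Complex.I) := by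
          have hMne : ((M:ℂ)) ≠ 0 := by exact_mod_cast hM0.ne'
          push_cast [hd]
          field_simp
        rw [key]
        exact Complex.exp_int_mul_two_pi_mul_I _
      have hzne : Complex.exp ((2 * Real.pi * d / M : ℝ) * Complex.I) ≠ 1 := by
        rw [Ne, Complex.exp_eq_one_iff]
        rintro ⟨n, hn⟩
        have him := congrArg Complex.im hn
        simp [Complex.mul_im, Complex.ofReal_im, Complex.ofReal_re] at him
        -- him : 2 * π * d / M = n * (2 * π)
        have hpi := Real.pi_pos
        have hdn : d = n * M := by
          field_simp at him
          nlinarith [him]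
        have habs : |(n:ℝ)| * M < M := by
          have h6 := hdlt
          rw [hdn, abs_mul, abs_of_pos hM0] at h6
          exact h6
        have hn1 : |(n:ℝ)| < 1 := by
          by_contra hcon
          push_neg at hcon
          nlinarith
        have hn0 : n = 0 := by
          have h7 : |n| < 1 := by exact_mod_cast hn1
          rcases abs_lt.mp h7 with ⟨h8, h9⟩
          omega
        subst hn0
        simp at hdn
        exact hdne hdn
      rw [geomZeroAux _ hzM hzne, mul_zero]
      simp [hjj]
  have h2 : IsLeast (Set.range fun k => ‖γ k‖)
      (2 * Real.sqrt (Real.sinh (η * ℓ / 2) ^ 2 + Real.sin (Real.pi / (2 * M)) ^ 2)) := by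
    have hN0 : (0:ℝ) < N := by exact_mod_cast hN
    have hM0 : (0:ℝ) < M := by positivity
    have hℓ0 : 0 < ℓ := by rw [hℓ]; positivity
    have hpi := Real.pi_pos
    -- |γ k| = 2 √(sin(a_k)² + sinh(ηℓ/2)²) with a_k = π(k+1/2)/M
    have habs : ∀ k : Fin M, ‖γ k‖
        = 2 * Real.sqrt (Real.sin (Real.pi * (((k:ℕ):ℝ) + 1/2) / M) ^ 2
            + Real.sinh (η * ℓ / 2) ^ 2) := by
      intro k
      have hxl2 : x k * ℓ / 2 = Real.pi * (((k:ℕ):ℝ) + 1/2) / M := by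
        rw [hx k]; field_simp
      have harg : (((x k : ℝ) : ℂ) + (η : ℂ) * Complex.I) * (ℓ : ℂ) / 2
          = ((x k * ℓ / 2 : ℝ) : ℂ) + ((η * ℓ / 2 : ℝ) : ℂ) * Complex.I := by
        push_cast; ring
      rw [hγ k, norm_mul, norm_mul, norm_mul, harg, absSinAux]
      have h1 : ‖Complex.exp (Complex.I * ((x k : ℝ) : ℂ) * (ℓ : ℂ) / 2)‖ = 1 := by
        rw [Complex.norm_exp]
        have : (Complex.I * ((x k : ℝ) : ℂ) * (ℓ : ℂ) / 2).re = 0 := by simp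
        rw [this, Real.exp_zero]
      rw [h1, hxl2]
      simp
    have hak0 : ∀ k : Fin M, Real.pi / (2 * M) ≤ Real.pi * (((k:ℕ):ℝ) + 1/2) / M := by
      intro k
      have : (0:ℝ) ≤ (k:ℕ) := by positivity
      rw [div_le_div_iff₀ (by positivity) hM0]
      nlinarith [mul_nonneg (mul_nonneg hpi.le hM0.le) this]
    have hak1 : ∀ k : Fin M, Real.pi * (((k:ℕ):ℝ) + 1/2) / M ≤ Real.pi - Real.pi / (2 * M) := by
      intro k
      have hk : ((k:ℕ):ℝ) ≤ M - 1 := by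
        have := k.2
        have : ((k:ℕ):ℝ) < M := by exact_mod_cast this
        linarith [(by exact_mod_cast Nat.lt_iff_add_one_le.mp k.2 : ((k:ℕ):ℝ) + 1 ≤ M)]
      calc Real.pi * (((k:ℕ):ℝ) + 1/2) / M ≤ Real.pi * ((M:ℝ) - 1/2) / M := by
            gcongr <;> linarith
        _ = Real.pi - Real.pi / (2 * M) := by field_simp
    have hM1 : (1:ℝ) ≤ M := by exact_mod_cast le_trans (by norm_num) hM
    have hεle : Real.pi / (2 * M) ≤ Real.pi / 2 := by
      apply div_le_div_of_nonneg_left hpi.le (by norm_num) (by linarith)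
    have hε0 : (0:ℝ) ≤ Real.pi / (2 * M) := by positivity
    have hsin0 : (0:ℝ) ≤ Real.sin (Real.pi / (2*M)) :=
      Real.sin_nonneg_of_nonneg_of_le_pi hε0 (by linarith)
    have hlb : ∀ k : Fin M, 2 * Real.sqrt (Real.sinh (η * ℓ / 2) ^ 2
        + Real.sin (Real.pi / (2 * M)) ^ 2) ≤ ‖γ k‖ := by
      intro k
      rw [habs k]
      have hs := sinGeAux hε0 hεle (hak0 k) (hak1 k)
      have h8 : Real.sin (Real.pi / (2*M)) ^ 2 ≤ Real.sin (Real.pi * (((k:ℕ):ℝ) + 1/2) / M) ^ 2 := by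
        apply pow_le_pow_left₀ hsin0 hs
      have h9 : Real.sinh (η * ℓ / 2) ^ 2 + Real.sin (Real.pi / (2 * M)) ^ 2
          ≤ Real.sin (Real.pi * (((k:ℕ):ℝ) + 1/2) / M) ^ 2 + Real.sinh (η * ℓ / 2) ^ 2 := by
        linarith
      exact mul_le_mul_of_nonneg_left (Real.sqrt_le_sqrt h9) (by norm_num)
    constructor
    · refine ⟨⟨0, by omega⟩, ?_⟩
      dsimp only
      rw [habs ⟨0, by omega⟩]
      have h10 : Real.pi * ((((⟨0, by omega⟩ : Fin M) : ℕ):ℝ) + 1/2) / M = Real.pi / (2*M) := by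
        push_cast
        field_simp
        try ring
      rw [h10, add_comm]
    · rintro y ⟨k, rfl⟩
      exact hlb k
  have hγlb : ∀ k, 2 * Real.sqrt (Real.sinh (η * ℓ / 2) ^ 2 + Real.sin (Real.pi / (2 * M)) ^ 2)
      ≤ ‖γ k‖ := fun k => h2.2 ⟨k, rfl⟩
  have hFF : ∀ j j' : Fin N, ∑ k, (starRingEnd ℂ) (F k j) * F k j' = if j = j' then (M:ℂ) else 0 := by
    intro j j'
    have h := congrFun (congrFun h1 j) j'
    rw [Matrix.mul_apply] at h
    simp only [Matrix.conjTranspose_apply, Matrix.smul_apply, Matrix.one_apply, smul_eq_mul,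
      Complex.star_def] at h
    rw [h]
    split <;> simp
  refine ⟨h1, h2, ?_⟩
  have hN0 : (0:ℝ) < N := by exact_mod_cast hN
  have hM0 : (0:ℝ) < M := by positivity
  have hℓ0 : 0 < ℓ := by rw [hℓ]; positivity
  set mγ : ℝ := 2 * Real.sqrt (Real.sinh (η * ℓ / 2) ^ 2 + Real.sin (Real.pi / (2 * M)) ^ 2)
    with hmγ
  set wmin : ℝ := Real.exp (-η * (Λ - ℓ / 2)) with hwmin
  have hmγ0 : 0 ≤ mγ := by positivity
  have hwmin0 : 0 < wmin := Real.exp_pos _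
  have hwlb : ∀ j : Fin N, wmin ≤ w j := by
    intro j
    rw [hw j, hwmin]
    apply Real.exp_le_exp.mpr
    have hj : ((j:ℕ):ℝ) + 1/2 ≤ (N:ℝ) - 1/2 := by
      have : ((j:ℕ):ℝ) + 1 ≤ N := by exact_mod_cast j.2
      linarith
    have hΛℓ : Λ - ℓ/2 = ((N:ℝ) - 1/2) * ℓ := by
      have : Λ = N * ℓ := by rw [hℓ]; field_simp
      rw [this]; ring
    rw [hΛℓ]
    nlinarith [mul_nonneg (mul_nonneg hη.le hℓ0.le) (by linarith : (0:ℝ) ≤ ((N:ℝ) - 1/2) - (((j:ℕ):ℝ) + 1/2))]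
  have : Nonempty {x : EuclideanSpace ℂ (Fin N) // ‖x‖ = 1} := by
    refine ⟨⟨EuclideanSpace.single (⟨0, hN⟩ : Fin N) (1:ℂ), ?_⟩⟩
    rw [EuclideanSpace.norm_single]
    norm_num
  apply le_ciInf
  rintro ⟨c, hc⟩
  set v : Fin N → ℂ := fun j => (w j : ℂ) * c j with hv
  set g : Fin M → ℂ := fun k => ∑ j, F k j * v j with hg
  have hTck : ∀ k, (Matrix.toEuclideanLin T c) k = γ k * g k := by
    intro k
    simp only [Matrix.toEuclideanLin_apply, PiLp.toLp_apply,
      Matrix.mulVec, dotProduct, hg]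
    rw [Finset.mul_sum]
    refine Finset.sum_congr rfl (fun j _ => ?_)
    rw [hT k j, hv]
    ring
  have hnorm : ‖Matrix.toEuclideanLin T c‖
      = Real.sqrt (∑ k, ‖γ k‖ ^ 2 * ‖g k‖ ^ 2) := by
    rw [EuclideanSpace.norm_eq]
    congr 1
    refine Finset.sum_congr rfl (fun k _ => ?_)
    rw [hTck k, norm_mul, mul_pow]
  -- key Parseval identity
  have hkeyC : (↑(∑ k, Complex.normSq (g k)) : ℂ) = ↑((M:ℝ) * ∑ j, Complex.normSq (v j)) := by
    push_cast
    calc (∑ k, (Complex.normSq (g k) : ℂ))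
        = ∑ k, (starRingEnd ℂ) (g k) * g k := by
          refine Finset.sum_congr rfl (fun k _ => ?_)
          rw [mul_comm, Complex.mul_conj]
      _ = ∑ k, ∑ j, ∑ j', ((starRingEnd ℂ) (v j) * v j') *
            ((starRingEnd ℂ) (F k j) * F k j') := by
          refine Finset.sum_congr rfl (fun k _ => ?_)
          rw [hg]
          simp only [map_sum, map_mul]
          rw [Finset.sum_mul_sum]
          exact Finset.sum_congr rfl (fun j _ => Finset.sum_congr rfl (fun j' _ => by ring))
      _ = ∑ j, ∑ j', ((starRingEnd ℂ) (v j) * v j') * ∑ k, (starRingEnd ℂ) (F k j) * F k j' := by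
          rw [Finset.sum_comm]
          refine Finset.sum_congr rfl (fun j _ => ?_)
          rw [Finset.sum_comm]
          refine Finset.sum_congr rfl (fun j' _ => ?_)
          rw [Finset.mul_sum]
      _ = ∑ j, ((starRingEnd ℂ) (v j) * v j) * M := by
          refine Finset.sum_congr rfl (fun j _ => ?_)
          simp only [hFF, mul_ite, mul_zero]
          rw [Finset.sum_ite_eq]
          simp
      _ = (M:ℂ) * ∑ j, (Complex.normSq (v j) : ℂ) := by
          rw [← Finset.sum_mul, mul_comm]
          congr 1
          refine Finset.sum_congr rfl (fun j _ => ?_)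
          rw [mul_comm ((starRingEnd ℂ) (v j)), Complex.mul_conj]
  have hkey : ∑ k, Complex.normSq (g k) = (M:ℝ) * ∑ j, Complex.normSq (v j) := by
    exact_mod_cast hkeyC
  -- c has unit ℓ² mass
  have hcsum : ∑ j, ‖c j‖ ^ 2 = 1 := by
    have h := hc
    rw [EuclideanSpace.norm_eq] at h
    have h2 : ∑ j, ‖c j‖ ^ 2 = 1 := Real.sqrt_eq_one.mp h
    exact h2
  -- lower bounds
  have hvlb : wmin ^ 2 ≤ ∑ j, Complex.normSq (v j) := by
    calc wmin ^ 2 = ∑ j, wmin ^ 2 * ‖c j‖ ^ 2 := by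
          rw [← Finset.mul_sum, hcsum, mul_one]
      _ ≤ ∑ j, Complex.normSq (v j) := by
          refine Finset.sum_le_sum (fun j _ => ?_)
          rw [hv]
          simp only [← Complex.sq_norm, norm_mul, mul_pow, Complex.norm_real, Real.norm_eq_abs]
          have : wmin ^ 2 ≤ |w j| ^ 2 := by
            apply pow_le_pow_left₀ hwmin0.le
            exact le_trans (hwlb j) (le_abs_self _)
          exact mul_le_mul_of_nonneg_right this (by positivity)
  have hS : mγ ^ 2 * ((M:ℝ) * wmin ^ 2) ≤ ∑ k, ‖γ k‖ ^ 2 * ‖g k‖ ^ 2 := by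
    calc mγ ^ 2 * ((M:ℝ) * wmin ^ 2)
        ≤ mγ ^ 2 * ((M:ℝ) * ∑ j, Complex.normSq (v j)) := by
          apply mul_le_mul_of_nonneg_left _ (by positivity)
          exact mul_le_mul_of_nonneg_left hvlb (by positivity)
      _ = mγ ^ 2 * ∑ k, Complex.normSq (g k) := by rw [hkey]
      _ = ∑ k, mγ ^ 2 * ‖g k‖ ^ 2 := by
          rw [← Finset.mul_sum]
          congr 1
          exact Finset.sum_congr rfl (fun k _ => (Complex.sq_norm _).symm)
      _ ≤ ∑ k, ‖γ k‖ ^ 2 * ‖g k‖ ^ 2 := by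
          refine Finset.sum_le_sum (fun k _ => ?_)
          apply mul_le_mul_of_nonneg_right _ (by positivity)
          exact pow_le_pow_left₀ hmγ0 (hγlb k) 2
  rw [hnorm]
  have hb0 : 0 ≤ 2 * Real.sqrt M * Real.sqrt (Real.sinh (η * ℓ / 2) ^ 2
      + Real.sin (Real.pi / (2 * M)) ^ 2) * wmin := by positivity
  rw [show (2 : ℝ) * Real.sqrt M * Real.sqrt (Real.sinh (η * ℓ / 2) ^ 2
      + Real.sin (Real.pi / (2 * M)) ^ 2) * wmin
    = Real.sqrt ((2 * Real.sqrt M * Real.sqrt (Real.sinh (η * ℓ / 2) ^ 2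
      + Real.sin (Real.pi / (2 * M)) ^ 2) * wmin) ^ 2) from (Real.sqrt_sq hb0).symm]
  apply Real.sqrt_le_sqrt
  have hsq : (2 * Real.sqrt M * Real.sqrt (Real.sinh (η * ℓ / 2) ^ 2
      + Real.sin (Real.pi / (2 * M)) ^ 2) * wmin) ^ 2 = mγ ^ 2 * ((M:ℝ) * wmin ^ 2) := by
    rw [hmγ]
    rw [mul_pow, mul_pow, mul_pow, mul_pow, Real.sq_sqrt hM0.le, Real.sq_sqrt (by positivity)]
    ring
  rw [hsq]
  exact hS
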